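/- Let k be a positive integer, and for each 1 ≤ i ≤ k let G_i be a simple graph on n_i vertices with vertex weight ω_i. Let G = G_1 ∪ … ∪ G_k be their disjoint union with the inherited vertex weight ω (ω(v) = ω_i(v) for v a vertex of G_i). Then LE_ω(G) ≤ Σ_{i=1}^k LE_{ω_i}(G_i) + Σ_{i=1}^k |ω̄_i − ω̄|·n_i, where ω̄_i is the average weight of G_i and ω̄ is the average weight of G. -/

import Mathlib

open scoped BigOperators

section Aux

variable {k : ℕ} {nv : Fin k → ℕ}

/-- Pad a family of block vectors into a big matrix whose columns are the padded vectors. -/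
noncomputable def padMat (nv : Fin k → ℕ) (V : ∀ i, Fin (nv i) → Fin (nv i) → ℝ) :
    Matrix ((i : Fin k) × Fin (nv i)) ((i : Fin k) × Fin (nv i)) ℝ :=
  fun x p => if h : x.1 = p.1 then V p.1 p.2 (Fin.cast (congrArg nv h) x.2) else 0

lemma fin_cast_self {n : ℕ} (h : n = n) (x : Fin n) : Fin.cast h x = x := by
  apply Fin.ext; simp

lemma padMat_orthonormal (V : ∀ i, Fin (nv i) → Fin (nv i) → ℝ)
    (hV : ∀ i (κ l : Fin (nv i)), (∑ w, V i κ w * V i l w) = if κ = l then 1 else 0) :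
    star (padMat nv V) * padMat nv V = 1 := by
  ext p q
  rw [Matrix.mul_apply, ← Finset.univ_sigma_univ, Finset.sum_sigma]
  obtain ⟨i, κ⟩ := p
  obtain ⟨j, l⟩ := q
  simp only [Matrix.star_apply, star_trivial]
  by_cases hij : i = j
  · subst hij
    rw [Finset.sum_eq_single i (fun m _ hm => Finset.sum_eq_zero fun w _ => by
      simp [padMat, hm]) (by simp)]
    simp only [padMat, dif_pos rfl, fin_cast_self, dite_true, eq_self_iff_true]
    rw [hV]
    by_cases hkl : κ = l
    · subst hkl; simp [Matrix.one_apply]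
    · rw [if_neg hkl, Matrix.one_apply_ne (by simp [hkl])]
  · rw [Matrix.one_apply_ne (by simp [Sigma.mk.inj_iff, hij])]
    refine Finset.sum_eq_zero fun m _ => Finset.sum_eq_zero fun w _ => ?_
    by_cases hmi : m = i
    · have hmj : m ≠ j := fun h => hij (hmi ▸ h)
      simp [padMat, hmj]
    · simp [padMat, hmi]

lemma padMat_mul (V : ∀ i, Fin (nv i) → Fin (nv i) → ℝ)
    (B : ∀ i, Matrix (Fin (nv i)) (Fin (nv i)) ℝ)
    (μ : ∀ i, Fin (nv i) → ℝ)
    (M : Matrix ((i : Fin k) × Fin (nv i)) ((i : Fin k) × Fin (nv i)) ℝ)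
    (hblock : ∀ (i j : Fin k) (v : Fin (nv i)) (w : Fin (nv j)),
      M ⟨i, v⟩ ⟨j, w⟩ = if h : j = i then B i v (Fin.cast (congrArg nv h) w) else 0)
    (heig : ∀ i κ, (B i).mulVec (V i κ) = μ i κ • V i κ) :
    M * padMat nv V = padMat nv V * Matrix.diagonal (fun p => μ p.1 p.2) := by
  ext x p
  rw [Matrix.mul_apply, Matrix.mul_diagonal, ← Finset.univ_sigma_univ, Finset.sum_sigma]
  obtain ⟨j, w⟩ := x
  obtain ⟨i, κ⟩ := p
  rw [Finset.sum_eq_single i (fun m _ hm => Finset.sum_eq_zero fun u _ => by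
    simp [padMat, hm]) (by simp)]
  by_cases hji : j = i
  · subst hji
    simp only [padMat, hblock, dif_pos rfl, fin_cast_self, dite_true, eq_self_iff_true]
    have h2 := congrFun (heig j κ) w
    simp only [Matrix.mulVec, dotProduct, Pi.smul_apply, smul_eq_mul] at h2
    rw [h2, mul_comm]
  · have h0 : ∀ u : Fin (nv i), M ⟨j, w⟩ ⟨i, u⟩ = 0 := fun u => by
      rw [hblock, dif_neg (fun hh => hji hh.symm)]
    simp [padMat, hji, h0]

end Aux

/-- Upper bound on the weighted Laplacian energy of a disjoint union of graphs:
`LE_ω(⋃ᵢ Gᵢ) ≤ ∑ᵢ LE_{ωᵢ}(Gᵢ) + ∑ᵢ |ω̄ᵢ - ω̄|·nᵢ`.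
The disjoint union `G` is a graph on `Σ i, Fin (nv i)` whose adjacency relation
restricts on each block to that of `Gᵢ`, with no edges between blocks, and whose
weight `ω` restricts to `ωᵢ` on the vertices of `Gᵢ`. -/
theorem weighted_laplacian_energy_disjoint_union_le
    (k : ℕ) (hk : 0 < k) (nv : Fin k → ℕ) (hnv : ∀ i, 0 < nv i)
    (Gf : ∀ i, SimpleGraph (Fin (nv i))) [∀ i, DecidableRel fun a b => (Gf i).Adj a b]
    (ωf : ∀ i, Fin (nv i) → ℝ) (hωf : ∀ i v, 0 < ωf i v)
    (G : SimpleGraph (Σ i, Fin (nv i))) [DecidableRel G.Adj]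
    (hG : ∀ a b : Σ i, Fin (nv i),
      G.Adj a b ↔ ∃ h : b.1 = a.1, (Gf a.1).Adj a.2 (h ▸ b.2))
    (ω : (Σ i, Fin (nv i)) → ℝ) (hωdef : ∀ i v, ω ⟨i, v⟩ = ωf i v)
    (hL : (Matrix.diagonal ω - G.adjMatrix ℝ).IsHermitian)
    (hLf : ∀ i, (Matrix.diagonal (ωf i) - (Gf i).adjMatrix ℝ).IsHermitian) :
    ∑ a, |hL.eigenvalues a - (∑ b, ω b) / (∑ i, (nv i : ℝ))| ≤
      (∑ i, ∑ v, |(hLf i).eigenvalues v - (∑ w, ωf i w) / (nv i)|) +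
        ∑ i, |(∑ w, ωf i w) / (nv i) - (∑ b, ω b) / (∑ j, (nv j : ℝ))| * (nv i) := by
  classical
  set c : ℝ := (∑ b, ω b) / (∑ i, (nv i : ℝ)) with hc
  -- block structure of the big Laplacian
  have hblock : ∀ (i j : Fin k) (v : Fin (nv i)) (w : Fin (nv j)),
      (Matrix.diagonal ω - G.adjMatrix ℝ) ⟨i, v⟩ ⟨j, w⟩ = if h : j = i then
        (Matrix.diagonal (ωf i) - (Gf i).adjMatrix ℝ) v (Fin.cast (congrArg nv h) w)
        else 0 := by
    intro i j v w
    by_cases h : j = i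
    · subst h
      rw [dif_pos rfl, fin_cast_self]
      have hadj : G.Adj ⟨j, v⟩ ⟨j, w⟩ ↔ (Gf j).Adj v w := by
        rw [hG]
        exact ⟨fun ⟨h, ha⟩ => ha, fun ha => ⟨rfl, ha⟩⟩
      have hdia : (Matrix.diagonal ω) ⟨j, v⟩ ⟨j, w⟩ = Matrix.diagonal (ωf j) v w := by
        by_cases hvw : v = w
        · subst hvw; simp [Matrix.diagonal_apply, hωdef]
        · rw [Matrix.diagonal_apply_ne _ (by simp [hvw]), Matrix.diagonal_apply_ne _ hvw]
      simp only [Matrix.sub_apply, hdia, SimpleGraph.adjMatrix_apply]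
      rw [if_congr hadj rfl rfl]
    · rw [dif_neg h]
      have hadj : ¬ G.Adj ⟨i, v⟩ ⟨j, w⟩ := by
        rw [hG]; rintro ⟨hh, -⟩; exact h hh
      simp only [Matrix.sub_apply, SimpleGraph.adjMatrix_apply, if_neg hadj]
      rw [Matrix.diagonal_apply_ne _
        (by simp [Sigma.mk.inj_iff]; intro hij; exact (h hij.symm).elim)]
      simp
  -- orthonormality of the block eigenbases as plain sums
  have hV : ∀ i (κ l : Fin (nv i)),
      (∑ w, (hLf i).eigenvectorBasis κ w * (hLf i).eigenvectorBasis l w)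
        = if κ = l then 1 else 0 := by
    intro i κ l
    have := orthonormal_iff_ite.mp (hLf i).eigenvectorBasis.orthonormal κ l
    simpa [PiLp.inner_apply, mul_comm] using this
  have heig : ∀ i (κ : Fin (nv i)),
      (Matrix.diagonal (ωf i) - (Gf i).adjMatrix ℝ).mulVec ⇑((hLf i).eigenvectorBasis κ)
        = (hLf i).eigenvalues κ • ⇑((hLf i).eigenvectorBasis κ) :=
    fun i κ => (hLf i).mulVec_eigenvectorBasis κ
  set P : Matrix ((i : Fin k) × Fin (nv i)) ((i : Fin k) × Fin (nv i)) ℝ :=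
    padMat nv (fun i κ => ⇑((hLf i).eigenvectorBasis κ)) with hP
  have hPP : star P * P = 1 := padMat_orthonormal _ hV
  have hPP' : P * star P = 1 := mul_eq_one_comm.mp hPP
  have hMP : (Matrix.diagonal ω - G.adjMatrix ℝ) * P
      = P * Matrix.diagonal (fun p : (i : Fin k) × Fin (nv i) => (hLf p.1).eigenvalues p.2) :=
    padMat_mul _ _ _ _ hblock heig
  set U : Matrix ((i : Fin k) × Fin (nv i)) ((i : Fin k) × Fin (nv i)) ℝ :=
    ↑hL.eigenvectorUnitary with hU
  have hUU' : U * star U = 1 := Matrix.mem_unitaryGroup_iff.mp hL.eigenvectorUnitary.2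
  have hUU : star U * U = 1 := mul_eq_one_comm.mp hUU'
  have hspec := hL.spectral_theorem
  rw [RCLike.ofReal_real_eq_id, Function.id_comp, Unitary.conjStarAlgAut_apply, ← hU] at hspec
  have hUM : star U * (Matrix.diagonal ω - G.adjMatrix ℝ)
      = Matrix.diagonal hL.eigenvalues * star U := by
    conv_lhs => rw [hspec]
    rw [← Matrix.mul_assoc, ← Matrix.mul_assoc, hUU, Matrix.one_mul]
  set Q : Matrix ((i : Fin k) × Fin (nv i)) ((i : Fin k) × Fin (nv i)) ℝ :=
    star U * P with hQ
  have hQQ : Q * star Q = 1 := by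
    rw [hQ, star_mul, star_star, Matrix.mul_assoc, ← Matrix.mul_assoc P (star P) U,
      hPP', Matrix.one_mul, hUU]
  have hQQ' : star Q * Q = 1 := mul_eq_one_comm.mp hQQ
  have hDQ : Matrix.diagonal hL.eigenvalues * Q
      = Q * Matrix.diagonal (fun p : (i : Fin k) × Fin (nv i) => (hLf p.1).eigenvalues p.2) := by
    rw [hQ, ← Matrix.mul_assoc, ← hUM, Matrix.mul_assoc, hMP, Matrix.mul_assoc]
  have hiden : ∀ a p, hL.eigenvalues a * Q a p = Q a p * (hLf p.1).eigenvalues p.2 := by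
    intro a p
    have := congrFun (congrFun hDQ a) p
    simpa [Matrix.diagonal_mul, Matrix.mul_diagonal] using this
  have hrow : ∀ a, ∑ p, Q a p * Q a p = 1 := by
    intro a
    have := congrFun (congrFun hQQ a) a
    simpa [Matrix.mul_apply, Matrix.star_apply, Matrix.one_apply] using this
  have hcol : ∀ p, ∑ a, Q a p * Q a p = 1 := by
    intro p
    have := congrFun (congrFun hQQ' p) p
    simpa [Matrix.mul_apply, Matrix.star_apply, Matrix.one_apply] using this
  have hkey : ∀ a, hL.eigenvalues a - c
      = ∑ p, (Q a p * Q a p) * ((hLf p.1).eigenvalues p.2 - c) := by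
    intro a
    have h1 : ∑ p, (Q a p * Q a p) * ((hLf p.1).eigenvalues p.2 - c)
        = ∑ p, (Q a p * Q a p) * (hL.eigenvalues a - c) := by
      refine Finset.sum_congr rfl fun p _ => ?_
      have h2 := hiden a p
      calc Q a p * Q a p * ((hLf p.1).eigenvalues p.2 - c)
          = Q a p * (Q a p * (hLf p.1).eigenvalues p.2) - Q a p * Q a p * c := by ring
        _ = Q a p * (hL.eigenvalues a * Q a p) - Q a p * Q a p * c := by rw [← h2]
        _ = Q a p * Q a p * (hL.eigenvalues a - c) := by ring
    rw [h1, ← Finset.sum_mul, hrow a, one_mul]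
  have step1 : ∑ a, |hL.eigenvalues a - c|
      ≤ ∑ p : (i : Fin k) × Fin (nv i), |(hLf p.1).eigenvalues p.2 - c| := by
    calc ∑ a, |hL.eigenvalues a - c|
        = ∑ a, |∑ p, (Q a p * Q a p) * ((hLf p.1).eigenvalues p.2 - c)| :=
          Finset.sum_congr rfl fun a _ => by rw [hkey a]
      _ ≤ ∑ a, ∑ p, |(Q a p * Q a p) * ((hLf p.1).eigenvalues p.2 - c)| :=
          Finset.sum_le_sum fun a _ => Finset.abs_sum_le_sum_abs _ _
      _ = ∑ a, ∑ p, (Q a p * Q a p) * |(hLf p.1).eigenvalues p.2 - c| := by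
          simp [abs_mul, abs_mul_self]
      _ = ∑ p, (∑ a, Q a p * Q a p) * |(hLf p.1).eigenvalues p.2 - c| := by
          rw [Finset.sum_comm]
          simp [Finset.sum_mul]
      _ = ∑ p : (i : Fin k) × Fin (nv i), |(hLf p.1).eigenvalues p.2 - c| := by
          simp [hcol]
  have step2 : (∑ p : (i : Fin k) × Fin (nv i), |(hLf p.1).eigenvalues p.2 - c|)
      = ∑ i, ∑ v, |(hLf i).eigenvalues v - c| := by
    rw [← Finset.univ_sigma_univ, Finset.sum_sigma]
  refine le_trans (step1.trans_eq step2) ?_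
  have step3 : ∀ i, (∑ v, |(hLf i).eigenvalues v - c|)
      ≤ (∑ v, |(hLf i).eigenvalues v - (∑ w, ωf i w) / (nv i)|)
        + |(∑ w, ωf i w) / (nv i) - c| * (nv i) := by
    intro i
    calc ∑ v, |(hLf i).eigenvalues v - c|
        ≤ ∑ v : Fin (nv i), (|(hLf i).eigenvalues v - (∑ w, ωf i w) / (nv i)|
            + |(∑ w, ωf i w) / (nv i) - c|) :=
          Finset.sum_le_sum fun v _ => abs_sub_le _ _ _
      _ = (∑ v, |(hLf i).eigenvalues v - (∑ w, ωf i w) / (nv i)|)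
          + |(∑ w, ωf i w) / (nv i) - c| * (nv i) := by
          rw [Finset.sum_add_distrib, Finset.sum_const, Finset.card_univ, Fintype.card_fin,
            nsmul_eq_mul, mul_comm]
  calc ∑ i, ∑ v, |(hLf i).eigenvalues v - c|
      ≤ ∑ i, ((∑ v, |(hLf i).eigenvalues v - (∑ w, ωf i w) / (nv i)|)
          + |(∑ w, ωf i w) / (nv i) - c| * (nv i)) := Finset.sum_le_sum fun i _ => step3 i
    _ = _ := by rw [Finset.sum_add_distrib]
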